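/- For f, g ∈ L^p(μ) with 0 < p < ∞, p ≠ 2, the Clarkson equality ‖f+g‖_p^p + ‖f-g‖_p^p = 2(‖f‖_p^p + ‖g‖_p^p) holds if and only if f·g = 0 almost everywhere. -/

import Mathlib

open MeasureTheory ENNReal

private lemma key_rpow {q : ℝ} (hq0 : 0 < q) : ∀ z : ℝ, 0 < z → z * z ^ (q - 1) = z ^ q := by
  intro z hz
  have h := Real.rpow_add hz 1 (q - 1)
  rw [Real.rpow_one] at h
  rw [← h]
  norm_num

private lemma strict_subadd {q x y : ℝ} (hq0 : 0 < q) (hq1 : q < 1) (hx : 0 < x) (hy : 0 < y) :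
    (x + y) ^ q < x ^ q + y ^ q := by
  have hxy : 0 < x + y := by linarith
  have h1 : (x + y) ^ (q - 1) < x ^ (q - 1) :=
    Real.rpow_lt_rpow_of_neg hx (lt_add_of_pos_right x hy) (by linarith)
  have h2 : (x + y) ^ (q - 1) < y ^ (q - 1) :=
    Real.rpow_lt_rpow_of_neg hy (lt_add_of_pos_left y hx) (by linarith)
  calc (x + y) ^ q = (x + y) * (x + y) ^ (q - 1) := (key_rpow hq0 _ hxy).symm
    _ = x * (x + y) ^ (q - 1) + y * (x + y) ^ (q - 1) := by ring
    _ < x * x ^ (q - 1) + y * y ^ (q - 1) :=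
        add_lt_add (mul_lt_mul_of_pos_left h1 hx) (mul_lt_mul_of_pos_left h2 hy)
    _ = x ^ q + y ^ q := by rw [key_rpow hq0 x hx, key_rpow hq0 y hy]

private lemma strict_superadd {q x y : ℝ} (hq1 : 1 < q) (hx : 0 < x) (hy : 0 < y) :
    x ^ q + y ^ q < (x + y) ^ q := by
  have hq0 : 0 < q := by linarith
  have hxy : 0 < x + y := by linarith
  have h1 : x ^ (q - 1) < (x + y) ^ (q - 1) :=
    Real.rpow_lt_rpow hx.le (lt_add_of_pos_right x hy) (by linarith)
  have h2 : y ^ (q - 1) < (x + y) ^ (q - 1) :=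
    Real.rpow_lt_rpow hy.le (lt_add_of_pos_left y hx) (by linarith)
  calc x ^ q + y ^ q = x * x ^ (q - 1) + y * y ^ (q - 1) := by
        rw [key_rpow hq0 x hx, key_rpow hq0 y hy]
    _ < x * (x + y) ^ (q - 1) + y * (x + y) ^ (q - 1) :=
        add_lt_add (mul_lt_mul_of_pos_left h1 hx) (mul_lt_mul_of_pos_left h2 hy)
    _ = (x + y) * (x + y) ^ (q - 1) := by ring
    _ = (x + y) ^ q := key_rpow hq0 _ hxy

private lemma rpow_mul_self {p : ℝ} (hp0 : 0 < p) (z : ℝ) (hz : 0 ≤ z) :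
    z ^ p = (z * z) ^ (p / 2) := by
  have h2 : z * z = z ^ (2 : ℝ) := by
    rw [show (2:ℝ) = ((2:ℕ):ℝ) by norm_num, Real.rpow_natCast]; ring
  rw [h2, ← Real.rpow_mul hz, show (2:ℝ) * (p / 2) = p from by ring]

/-- Pointwise Clarkson inequality for `p < 2`, with strictness when both are nonzero. -/
private lemma clarkson_lt {p : ℝ} (hp0 : 0 < p) (hp2 : p < 2) (a b : ℂ) :
    ‖a + b‖ ^ p + ‖a - b‖ ^ p ≤ 2 * (‖a‖ ^ p + ‖b‖ ^ p) ∧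
      (a ≠ 0 → b ≠ 0 → ‖a + b‖ ^ p + ‖a - b‖ ^ p < 2 * (‖a‖ ^ p + ‖b‖ ^ p)) := by
  set q := p / 2 with hq
  have hq0 : 0 < q := by positivity
  have hq1 : q < 1 := by rw [hq]; linarith
  have par := parallelogram_law_with_norm ℂ a b
  have conc := (Real.concaveOn_rpow hq0.le hq1.le).2
    (Set.mem_Ici.2 (mul_self_nonneg ‖a + b‖)) (Set.mem_Ici.2 (mul_self_nonneg ‖a - b‖))
    (by norm_num : (0:ℝ) ≤ 1/2) (by norm_num : (0:ℝ) ≤ 1/2) (by norm_num)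
  simp only [smul_eq_mul] at conc
  have hmid : (1/2 : ℝ) * (‖a + b‖ * ‖a + b‖) + (1/2) * (‖a - b‖ * ‖a - b‖)
      = ‖a‖ * ‖a‖ + ‖b‖ * ‖b‖ := by linarith
  rw [hmid] at conc
  have step1 : ‖a + b‖ ^ p + ‖a - b‖ ^ p ≤ 2 * (‖a‖ * ‖a‖ + ‖b‖ * ‖b‖) ^ q := by
    rw [rpow_mul_self hp0 _ (norm_nonneg (a+b)), rpow_mul_self hp0 _ (norm_nonneg (a-b))]
    linarith
  have hfg : ∀ x : ℂ, x ≠ 0 → 0 < ‖x‖ * ‖x‖ := fun x hx =>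
    mul_pos (norm_pos_iff.2 hx) (norm_pos_iff.2 hx)
  constructor
  · rcases eq_or_ne a 0 with rfl | ha
    · have : (‖(0:ℂ)‖ * ‖(0:ℂ)‖ + ‖b‖ * ‖b‖) ^ q = (‖(0:ℂ)‖*‖(0:ℂ)‖) ^ q + (‖b‖*‖b‖) ^ q := by
        simp [Real.zero_rpow hq0.ne']
      refine step1.trans ?_
      rw [this, ← rpow_mul_self hp0 _ (norm_nonneg _), ← rpow_mul_self hp0 _ (norm_nonneg _)]
    · rcases eq_or_ne b 0 with rfl | hb
      · have : (‖a‖ * ‖a‖ + ‖(0:ℂ)‖ * ‖(0:ℂ)‖) ^ q = (‖a‖*‖a‖) ^ q + (‖(0:ℂ)‖*‖(0:ℂ)‖) ^ q := by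
          simp [Real.zero_rpow hq0.ne']
        refine step1.trans ?_
        rw [this, ← rpow_mul_self hp0 _ (norm_nonneg _), ← rpow_mul_self hp0 _ (norm_nonneg _)]
      · have h' := strict_subadd hq0 hq1 (hfg a ha) (hfg b hb)
        rw [← rpow_mul_self hp0 _ (norm_nonneg a), ← rpow_mul_self hp0 _ (norm_nonneg b)] at h'
        linarith
  · intro ha hb
    have := strict_subadd hq0 hq1 (hfg a ha) (hfg b hb)
    rw [← rpow_mul_self hp0 _ (norm_nonneg a), ← rpow_mul_self hp0 _ (norm_nonneg b)] at this
    calc ‖a + b‖ ^ p + ‖a - b‖ ^ p ≤ 2 * (‖a‖ * ‖a‖ + ‖b‖ * ‖b‖) ^ q := step1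
      _ < 2 * (‖a‖ ^ p + ‖b‖ ^ p) := by linarith

/-- Pointwise Clarkson inequality for `p > 2`, with strictness when both are nonzero. -/
private lemma clarkson_gt {p : ℝ} (hp2 : 2 < p) (a b : ℂ) :
    2 * (‖a‖ ^ p + ‖b‖ ^ p) ≤ ‖a + b‖ ^ p + ‖a - b‖ ^ p ∧
      (a ≠ 0 → b ≠ 0 → 2 * (‖a‖ ^ p + ‖b‖ ^ p) < ‖a + b‖ ^ p + ‖a - b‖ ^ p) := by
  have hp0 : 0 < p := by linarith
  set q := p / 2 with hq
  have hq0 : 0 < q := by positivity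
  have hq1 : 1 < q := by rw [hq]; linarith
  have par := parallelogram_law_with_norm ℂ a b
  have conv := (convexOn_rpow hq1.le).2
    (Set.mem_Ici.2 (mul_self_nonneg ‖a + b‖)) (Set.mem_Ici.2 (mul_self_nonneg ‖a - b‖))
    (by norm_num : (0:ℝ) ≤ 1/2) (by norm_num : (0:ℝ) ≤ 1/2) (by norm_num)
  simp only [smul_eq_mul] at conv
  have hmid : (1/2 : ℝ) * (‖a + b‖ * ‖a + b‖) + (1/2) * (‖a - b‖ * ‖a - b‖)
      = ‖a‖ * ‖a‖ + ‖b‖ * ‖b‖ := by linarith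
  rw [hmid] at conv
  have step1 : 2 * (‖a‖ * ‖a‖ + ‖b‖ * ‖b‖) ^ q ≤ ‖a + b‖ ^ p + ‖a - b‖ ^ p := by
    rw [rpow_mul_self hp0 _ (norm_nonneg (a+b)), rpow_mul_self hp0 _ (norm_nonneg (a-b))]
    linarith
  have hfg : ∀ x : ℂ, x ≠ 0 → 0 < ‖x‖ * ‖x‖ := fun x hx =>
    mul_pos (norm_pos_iff.2 hx) (norm_pos_iff.2 hx)
  constructor
  · rcases eq_or_ne a 0 with rfl | ha
    · have : (‖(0:ℂ)‖ * ‖(0:ℂ)‖ + ‖b‖ * ‖b‖) ^ q = (‖(0:ℂ)‖*‖(0:ℂ)‖) ^ q + (‖b‖*‖b‖) ^ q := by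
        simp [Real.zero_rpow hq0.ne']
      refine le_trans ?_ step1
      rw [this, ← rpow_mul_self hp0 _ (norm_nonneg _), ← rpow_mul_self hp0 _ (norm_nonneg _)]
    · rcases eq_or_ne b 0 with rfl | hb
      · have : (‖a‖ * ‖a‖ + ‖(0:ℂ)‖ * ‖(0:ℂ)‖) ^ q = (‖a‖*‖a‖) ^ q + (‖(0:ℂ)‖*‖(0:ℂ)‖) ^ q := by
          simp [Real.zero_rpow hq0.ne']
        refine le_trans ?_ step1
        rw [this, ← rpow_mul_self hp0 _ (norm_nonneg _), ← rpow_mul_self hp0 _ (norm_nonneg _)]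
      · have := strict_superadd hq1 (hfg a ha) (hfg b hb)
        refine le_trans (le_of_lt ?_) step1
        rw [← rpow_mul_self hp0 _ (norm_nonneg a), ← rpow_mul_self hp0 _ (norm_nonneg b)] at this
        linarith
  · intro ha hb
    have := strict_superadd hq1 (hfg a ha) (hfg b hb)
    rw [← rpow_mul_self hp0 _ (norm_nonneg a), ← rpow_mul_self hp0 _ (norm_nonneg b)] at this
    calc 2 * (‖a‖ ^ p + ‖b‖ ^ p) < 2 * (‖a‖ * ‖a‖ + ‖b‖ * ‖b‖) ^ q := by linarith
      _ ≤ ‖a + b‖ ^ p + ‖a - b‖ ^ p := step1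

/-- Pointwise equality case. -/
private lemma clarkson_eq_iff {p : ℝ} (hp0 : 0 < p) (hp2 : p ≠ 2) (a b : ℂ) :
    ‖a + b‖ ^ p + ‖a - b‖ ^ p = 2 * (‖a‖ ^ p + ‖b‖ ^ p) ↔ a * b = 0 := by
  constructor
  · intro h
    rw [mul_eq_zero]
    by_contra hab
    push_neg at hab
    rcases lt_or_gt_of_ne hp2 with hlt | hgt
    · exact absurd h (ne_of_lt ((clarkson_lt hp0 hlt a b).2 hab.1 hab.2))
    · exact absurd h.symm (ne_of_lt ((clarkson_gt hgt a b).2 hab.1 hab.2))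
  · intro h
    rcases mul_eq_zero.1 h with rfl | rfl
    · simp [Real.zero_rpow hp0.ne']; ring
    · simp [Real.zero_rpow hp0.ne']; ring

private lemma lintegral_eq_iff_ae {Ω : Type*} [MeasurableSpace Ω] {μ : Measure Ω}
    {P Q : Ω → ℝ≥0∞} (hP : AEMeasurable P μ) (hQ : AEMeasurable Q μ)
    (hle : ∀ ω, P ω ≤ Q ω) (hfin : ∫⁻ ω, Q ω ∂μ ≠ ∞) :
    ∫⁻ ω, P ω ∂μ = ∫⁻ ω, Q ω ∂μ ↔ P =ᵐ[μ] Q := by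
  constructor
  · intro h
    have hPfin : ∫⁻ ω, P ω ∂μ ≠ ∞ := by rw [h]; exact hfin
    have hsub : ∫⁻ ω, (Q ω - P ω) ∂μ = 0 := by
      rw [lintegral_sub' hP hPfin (Filter.Eventually.of_forall hle), h, tsub_self]
    have h0 := (lintegral_eq_zero_iff' (hQ.sub hP)).1 hsub
    filter_upwards [h0] with ω hω
    exact le_antisymm (hle ω) (tsub_eq_zero_iff_le.1 hω)
  · exact lintegral_congr_ae

/-- Equality case of the (commutative) Clarkson inequality in `L^p(μ)`,
`0 < p < ∞`, `p ≠ 2`: equality holds iff `f · g = 0` almost everywhere. -/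
theorem clarkson_equality_iff_disjoint_supports
    {Ω : Type*} [MeasurableSpace Ω] (μ : Measure Ω)
    (p : ℝ≥0∞) (hp0 : 0 < p) (hp_top : p ≠ ∞) (hp2 : p.toReal ≠ 2)
    (f g : Ω → ℂ) (hf : MemLp f p μ) (hg : MemLp g p μ) :
    eLpNorm (f + g) p μ ^ p.toReal + eLpNorm (f - g) p μ ^ p.toReal
      = 2 * (eLpNorm f p μ ^ p.toReal + eLpNorm g p μ ^ p.toReal)
    ↔ (∀ᵐ ω ∂μ, f ω * g ω = 0) := by
  have hpr0 : 0 < p.toReal := ENNReal.toReal_pos hp0.ne' hp_top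
  set pr := p.toReal with hpr
  -- rewrite `eLpNorm ^ pr` as a lintegral of `ofReal (‖·‖ ^ pr)`
  have conv : ∀ h : Ω → ℂ, eLpNorm h p μ ^ pr = ∫⁻ ω, ENNReal.ofReal (‖h ω‖ ^ pr) ∂μ := by
    intro h
    rw [eLpNorm_eq_lintegral_rpow_enorm_toReal hp0.ne' hp_top, one_div, ← ENNReal.rpow_mul,
      inv_mul_cancel₀ hpr0.ne', ENNReal.rpow_one]
    congr 1
    funext ω
    rw [← ofReal_norm, ← ENNReal.ofReal_rpow_of_nonneg (norm_nonneg _) hpr0.le]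
  -- measurability
  have hfm : AEMeasurable (fun ω => ‖f ω‖ ^ pr) μ :=
    hf.1.norm.aemeasurable.pow_const pr
  have hgm : AEMeasurable (fun ω => ‖g ω‖ ^ pr) μ :=
    hg.1.norm.aemeasurable.pow_const pr
  have haddm : AEMeasurable (fun ω => ‖f ω + g ω‖ ^ pr) μ :=
    (hf.1.add hg.1).norm.aemeasurable.pow_const pr
  have hsubm : AEMeasurable (fun ω => ‖f ω - g ω‖ ^ pr) μ :=
    (hf.1.sub hg.1).norm.aemeasurable.pow_const pr
  set P : Ω → ℝ≥0∞ := fun ω => ENNReal.ofReal (‖f ω + g ω‖ ^ pr + ‖f ω - g ω‖ ^ pr) with hP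
  set Q : Ω → ℝ≥0∞ := fun ω => ENNReal.ofReal (2 * (‖f ω‖ ^ pr + ‖g ω‖ ^ pr)) with hQ
  have hPm : AEMeasurable P μ := (haddm.add hsubm).ennreal_ofReal
  have hQm : AEMeasurable Q μ := (aemeasurable_const.mul (hfm.add hgm)).ennreal_ofReal
  have nn : ∀ x : ℂ, (0:ℝ) ≤ ‖x‖ ^ pr := fun x => Real.rpow_nonneg (norm_nonneg x) pr
  -- LHS as ∫ P
  have hL : eLpNorm (f + g) p μ ^ pr + eLpNorm (f - g) p μ ^ pr = ∫⁻ ω, P ω ∂μ := by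
    rw [conv (f + g), conv (f - g)]
    simp only [Pi.add_apply, Pi.sub_apply]
    rw [← lintegral_add_left' (haddm.ennreal_ofReal)]
    congr 1
    funext ω
    simp only [Pi.add_apply, Pi.sub_apply, hP]
    rw [ENNReal.ofReal_add (nn _) (nn _)]
  have hR : 2 * (eLpNorm f p μ ^ pr + eLpNorm g p μ ^ pr) = ∫⁻ ω, Q ω ∂μ := by
    rw [conv f, conv g, ← lintegral_add_left' (hfm.ennreal_ofReal),
      ← lintegral_const_mul' 2 _ (by norm_num : (2:ℝ≥0∞) ≠ ∞)]
    congr 1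
    funext ω
    simp only [hQ]
    rw [ENNReal.ofReal_mul (by norm_num : (0:ℝ) ≤ 2), ENNReal.ofReal_add (nn _) (nn _),
      ENNReal.ofReal_ofNat]
  -- finiteness of both integrals
  have hQfin : ∫⁻ ω, Q ω ∂μ ≠ ∞ := by
    rw [← hR]
    exact ENNReal.mul_ne_top (by norm_num) (ENNReal.add_ne_top.2
      ⟨(ENNReal.rpow_lt_top_of_nonneg hpr0.le hf.eLpNorm_ne_top).ne,
       (ENNReal.rpow_lt_top_of_nonneg hpr0.le hg.eLpNorm_ne_top).ne⟩)
  have hPfin : ∫⁻ ω, P ω ∂μ ≠ ∞ := by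
    rw [← hL]
    exact ENNReal.add_ne_top.2
      ⟨(ENNReal.rpow_lt_top_of_nonneg hpr0.le (hf.add hg).eLpNorm_ne_top).ne,
       (ENNReal.rpow_lt_top_of_nonneg hpr0.le (hf.sub hg).eLpNorm_ne_top).ne⟩
  -- pointwise characterization of equality
  have hpt : ∀ ω, P ω = Q ω ↔ f ω * g ω = 0 := by
    intro ω
    rw [hP, hQ, ENNReal.ofReal_eq_ofReal_iff (by positivity) (by positivity)]
    exact clarkson_eq_iff hpr0 hp2 (f ω) (g ω)
  have hae : (P =ᵐ[μ] Q) ↔ ∀ᵐ ω ∂μ, f ω * g ω = 0 :=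
    Filter.eventually_congr (Filter.Eventually.of_forall fun ω => hpt ω)
  rw [hL, hR]
  rcases lt_or_gt_of_ne hp2 with hlt | hgt
  · rw [lintegral_eq_iff_ae hPm hQm
      (fun ω => ENNReal.ofReal_le_ofReal (clarkson_lt hpr0 hlt (f ω) (g ω)).1) hQfin]
    exact hae
  · rw [show (∫⁻ ω, P ω ∂μ = ∫⁻ ω, Q ω ∂μ) ↔ (∫⁻ ω, Q ω ∂μ = ∫⁻ ω, P ω ∂μ) from eq_comm,
      lintegral_eq_iff_ae hQm hPm
      (fun ω => ENNReal.ofReal_le_ofReal (clarkson_gt hgt (f ω) (g ω)).1) hPfin]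
    exact (Filter.eventually_congr (Filter.Eventually.of_forall fun ω => eq_comm)).trans hae
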